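/- Projection of the estimation error onto the partial sums (key lemma for the OLS-CUSUM limit in regression): fix s ∈ [0,1] and p ≥ 1. Let (x̃_t)_{t≥1} be a deterministic sequence in ℝ^{p−1} such that (i) (1/T)∑_{t=1}^{⌊Tr⌋} x̃_t → 0 as T → ∞ for every r ∈ [0,1], and (ii) (1/T)∑_{t=1}^{T} x̃_t x̃_tᵀ → Q̃ as T → ∞ for some positive definite (p−1)×(p−1) matrix Q̃. Set x_t = (1, x̃_tᵀ)ᵀ ∈ ℝ^p. Let (ε_t)_{t≥1} be independent identically distributed real random variables on a probability space with E[ε₁] = 0 and E[ε₁²] = σ² < ∞. For T large enough that G_T = ∑_{t=1}^T x_t x_tᵀ is invertible, define δ_T = G_T^{−1} ∑_{t=1}^T x_t ε_t (the OLS estimation error β̂_T − β). Then (1/√T) ∑_{t=1}^{⌊Ts⌋} x_tᵀ δ_T − (s/√T) ∑_{t=1}^T ε_t → 0 in probability as T → ∞. -/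

import Mathlib

set_option maxHeartbeats 1000000

open MeasureTheory ProbabilityTheory Filter Finset Matrix

section Aux

lemma olsAux_smul_matrix_inv {n T : ℕ} (hT : 1 ≤ T) (B : Matrix (Fin n) (Fin n) ℝ)
    (hu : IsUnit B.det) : ((T:ℝ) • B)⁻¹ = (T:ℝ)⁻¹ • B⁻¹ := by
  have hT' : ((T:ℝ)) ≠ 0 := by positivity
  apply Matrix.inv_eq_right_inv
  rw [Matrix.smul_mul, Matrix.mul_smul, smul_smul, Matrix.mul_nonsing_inv _ hu,
    mul_inv_cancel₀ hT', one_smul]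

lemma olsAux_sum_dotProduct {n : ℕ} (r : Finset ℕ) (u : ℕ → Fin n → ℝ) (z : Fin n → ℝ) :
    (∑ t ∈ r, u t) ⬝ᵥ z = ∑ t ∈ r, u t ⬝ᵥ z := by
  simp only [dotProduct, Finset.sum_apply, Finset.sum_mul]
  exact Finset.sum_comm

lemma olsAux_dotProduct_sum {n : ℕ} (r : Finset ℕ) (c : Fin n → ℝ) (u : ℕ → Fin n → ℝ) :
    c ⬝ᵥ (∑ t ∈ r, u t) = ∑ t ∈ r, c ⬝ᵥ u t := by
  simp only [dotProduct, Finset.sum_apply, Finset.mul_sum]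
  exact Finset.sum_comm

lemma olsAux_sum_mulVec {n : ℕ} (r : Finset ℕ) (M : ℕ → Matrix (Fin n) (Fin n) ℝ)
    (c : Fin n → ℝ) : (∑ t ∈ r, M t) *ᵥ c = ∑ t ∈ r, (M t *ᵥ c) := by
  ext i
  simp only [Matrix.mulVec, dotProduct, Matrix.sum_apply, Finset.sum_apply,
    Finset.sum_mul]
  exact Finset.sum_comm

lemma olsAux_quad_eq {n : ℕ} (u c : Fin n → ℝ) :
    c ⬝ᵥ (Matrix.vecMulVec u u *ᵥ c) = (c ⬝ᵥ u)^2 := by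
  simp only [dotProduct, Matrix.mulVec, Matrix.vecMulVec, sq, Matrix.of_apply]
  rw [Finset.sum_mul_sum]
  refine Finset.sum_congr rfl fun i _ => ?_
  rw [Finset.mul_sum]
  refine Finset.sum_congr rfl fun j _ => ?_
  ring

lemma olsAux_dotProduct_single {n : ℕ} (w : Fin (n+1) → ℝ) (s : ℝ) :
    (s • (Pi.single 0 1 : Fin (n+1) → ℝ)) ⬝ᵥ w = s * w 0 := by
  simp [dotProduct, Pi.single_apply]

lemma olsAux_floor_tendsto (s : ℝ) (hs0 : 0 ≤ s) :
    Tendsto (fun T : ℕ => (1 / (T : ℝ)) * (⌊(T : ℝ) * s⌋₊ : ℝ)) atTop (nhds s) := by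
  have h1 : Tendsto (fun T : ℕ => s - 1 / (T : ℝ)) atTop (nhds s) := by
    simpa using tendsto_const_nhds.sub (tendsto_one_div_atTop_nhds_zero_nat (𝕜 := ℝ))
  apply tendsto_of_tendsto_of_tendsto_of_le_of_le' h1 tendsto_const_nhds
  · filter_upwards [eventually_gt_atTop 0] with T hT
    have hT' : (0:ℝ) < T := by exact_mod_cast hT
    have key : (T:ℝ)*s ≤ (⌊(T:ℝ)*s⌋₊:ℝ) + 1 := (Nat.lt_floor_add_one _).le
    have : s ≤ ((⌊(T:ℝ)*s⌋₊:ℝ) + 1)/T := by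
      rw [le_div_iff₀ hT']
      linarith [key]
    calc s - 1/(T:ℝ) ≤ ((⌊(T:ℝ)*s⌋₊:ℝ) + 1)/T - 1/T := by linarith
      _ = 1/(T:ℝ) * (⌊(T:ℝ)*s⌋₊:ℝ) := by field_simp; ring
  · filter_upwards [eventually_gt_atTop 0] with T hT
    have hT' : (0:ℝ) < T := by exact_mod_cast hT
    rw [one_div, inv_mul_le_iff₀ hT']
    exact Nat.floor_le (by positivity)

lemma olsAux_inv_tendsto {n : ℕ} (B : ℕ → Matrix (Fin n) (Fin n) ℝ)
    (A : Matrix (Fin n) (Fin n) ℝ)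
    (hBA : Tendsto B atTop (nhds A)) (hA : A.det ≠ 0) :
    Tendsto (fun T => (B T)⁻¹) atTop (nhds A⁻¹) := by
  have hdet : Tendsto (fun T => (B T).det) atTop (nhds A.det) :=
    ((continuous_id.matrix_det).tendsto A).comp hBA
  have hadj : Tendsto (fun T => (B T).adjugate) atTop (nhds A.adjugate) :=
    ((continuous_id.matrix_adjugate).tendsto A).comp hBA
  have hinv : Tendsto (fun T => ((B T).det)⁻¹) atTop (nhds (A.det)⁻¹) := hdet.inv₀ hA
  have := hinv.smul hadj
  simpa only [Matrix.inv_def, Ring.inverse_eq_inv'] using this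

lemma olsAux_vecMul_tendsto {n : ℕ} (u : ℕ → Fin n → ℝ) (M : ℕ → Matrix (Fin n) (Fin n) ℝ)
    (ul : Fin n → ℝ) (Ml : Matrix (Fin n) (Fin n) ℝ)
    (hu : Tendsto u atTop (nhds ul)) (hM : Tendsto M atTop (nhds Ml)) :
    Tendsto (fun T => u T ᵥ* M T) atTop (nhds (ul ᵥ* Ml)) := by
  have hcont : Continuous fun q : (Fin n → ℝ) × Matrix (Fin n) (Fin n) ℝ => q.1 ᵥ* q.2 :=
    Continuous.matrix_vecMul continuous_fst continuous_snd
  exact (hcont.tendsto (ul, Ml)).comp (hu.prodMk_nhds hM)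

lemma olsAux_quadform_tendsto {n : ℕ} (c : ℕ → Fin n → ℝ) (M : ℕ → Matrix (Fin n) (Fin n) ℝ)
    (Ml : Matrix (Fin n) (Fin n) ℝ)
    (hc : Tendsto c atTop (nhds 0)) (hM : Tendsto M atTop (nhds Ml)) :
    Tendsto (fun T => c T ⬝ᵥ (M T *ᵥ c T)) atTop (nhds 0) := by
  have hcont : Continuous fun q : (Fin n → ℝ) × Matrix (Fin n) (Fin n) ℝ =>
      q.1 ⬝ᵥ (q.2 *ᵥ q.1) :=
    Continuous.dotProduct continuous_fst
      (Continuous.matrix_mulVec continuous_snd continuous_fst)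
  have := (hcont.tendsto (0, Ml)).comp (hc.prodMk_nhds hM)
  simpa [Function.comp_def] using this

lemma olsAux_weighted_iid {Ω : Type*} [MeasurableSpace Ω] (μ : Measure Ω)
    [IsProbabilityMeasure μ] (ε : ℕ → Ω → ℝ) (σ2 : ℝ)
    (hindep : iIndepFun ε μ)
    (hident : ∀ t, IdentDistrib (ε t) (ε 0) μ μ)
    (hL2 : MemLp (ε 0) 2 μ)
    (hmean : ∫ ω, ε 0 ω ∂μ = 0)
    (hvar : ∫ ω, (ε 0 ω) ^ 2 ∂μ = σ2)
    (a : ℕ → ℝ) (T : ℕ) :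
    variance (∑ t ∈ Finset.range T, a t • ε t) μ = σ2 * ∑ t ∈ Finset.range T, (a t)^2
    ∧ MemLp (∑ t ∈ Finset.range T, a t • ε t) 2 μ
    ∧ ∫ ω, (∑ t ∈ Finset.range T, a t • ε t) ω ∂μ = 0 := by
  have hML : ∀ t, MemLp (ε t) 2 μ := fun t => (hident t).memLp_iff.2 hL2
  have hMLa : ∀ t ∈ Finset.range T, MemLp (a t • ε t) 2 μ := fun t _ => (hML t).const_smul (a t)
  have hvar0 : variance (ε 0) μ = σ2 := by
    rw [variance_eq_sub hL2, hmean]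
    simp only [Pi.pow_apply]
    rw [hvar]; ring
  constructor
  · rw [ProbabilityTheory.IndepFun.variance_sum hMLa ?_]
    · rw [Finset.mul_sum]
      congr 1; ext t
      rw [show (a t • ε t : Ω → ℝ) = a t • ε t from rfl, variance_smul,
        (hident t).variance_eq, hvar0]
      ring
    · intro i _ j _ hij
      have h := hindep.indepFun hij
      exact h.comp (measurable_const_mul (a i)) (measurable_const_mul (a j))
  constructor
  · exact memLp_finset_sum' _ hMLa
  · have hint : ∀ t ∈ Finset.range T, Integrable (a t • ε t) μ :=
      fun t _ => ((hML t).integrable (by norm_num)).smul (a t)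
    simp only [Finset.sum_apply]
    rw [integral_finset_sum _ hint]
    refine Finset.sum_eq_zero fun t _ => ?_
    have : ∫ ω, ε t ω ∂μ = 0 := by rw [(hident t).integral_eq, hmean]
    simp only [Pi.smul_apply, smul_eq_mul]
    rw [MeasureTheory.integral_const_mul, this, mul_zero]

end Aux

/-- Projection of the OLS estimation error onto the partial sums: the key lemma for the
Brownian bridge limit of the OLS-CUSUM statistic in a linear regression with intercept.
With `x_t = (1, x̃_tᵀ)ᵀ`, Cesàro-negligible regressor partial sums, a positive definite
second-moment limit, and i.i.d. mean-zero square-integrable errors,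
`(1/√T) ∑_{t=1}^{⌊Ts⌋} x_tᵀ(β̂_T − β) − (s/√T) ∑_{t=1}^T ε_t → 0` in probability. -/
theorem ols_error_projection_onto_partial_sums
    {Ω : Type*} [MeasurableSpace Ω] (μ : Measure Ω) [IsProbabilityMeasure μ]
    (s : ℝ) (hs : s ∈ Set.Icc (0 : ℝ) 1)
    (p' : ℕ) (xt : ℕ → Fin p' → ℝ)
    (hcesaro : ∀ r ∈ Set.Icc (0 : ℝ) 1,
      Tendsto (fun T : ℕ => (1 / (T : ℝ)) • ∑ t ∈ Finset.range ⌊(T : ℝ) * r⌋₊, xt t)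
        atTop (nhds 0))
    (Q : Matrix (Fin p') (Fin p') ℝ) (hQ : Q.PosDef)
    (hsecond : Tendsto
      (fun T : ℕ => (1 / (T : ℝ)) • ∑ t ∈ Finset.range T, Matrix.vecMulVec (xt t) (xt t))
      atTop (nhds Q))
    (x : ℕ → Fin (p' + 1) → ℝ) (hx : ∀ t, x t = Fin.cons 1 (xt t))
    (ε : ℕ → Ω → ℝ) (σ2 : ℝ)
    (hindep : iIndepFun ε μ)
    (hmeas : ∀ t, Measurable (ε t))
    (hident : ∀ t, IdentDistrib (ε t) (ε 0) μ μ)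
    (hL2 : MemLp (ε 0) 2 μ)
    (hmean : ∫ ω, ε 0 ω ∂μ = 0)
    (hvar : ∫ ω, (ε 0 ω) ^ 2 ∂μ = σ2)
    (G : ℕ → Matrix (Fin (p' + 1)) (Fin (p' + 1)) ℝ)
    (hG : ∀ T, G T = ∑ t ∈ Finset.range T, Matrix.vecMulVec (x t) (x t))
    (δ : ℕ → Ω → Fin (p' + 1) → ℝ)
    (hδ : ∀ T ω, δ T ω = (G T)⁻¹ *ᵥ (∑ t ∈ Finset.range T, ε t ω • x t)) :
    ∀ η > (0 : ℝ),
      Tendsto (fun T : ℕ =>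
          μ {ω | η < |(1 / Real.sqrt T) * ∑ t ∈ Finset.range ⌊(T : ℝ) * s⌋₊, x t ⬝ᵥ δ T ω
                    - (s / Real.sqrt T) * ∑ t ∈ Finset.range T, ε t ω|})
        atTop (nhds 0) := by
  intro η hη
  classical
  obtain ⟨hs0, hs1⟩ := hs
  set e : Fin (p'+1) → ℝ := Pi.single 0 1 with he
  set A : Matrix (Fin (p'+1)) (Fin (p'+1)) ℝ :=
    Matrix.of (Fin.cons (Fin.cons 1 0) (fun i => Fin.cons 0 (Q i))) with hA
  set B : ℕ → Matrix (Fin (p'+1)) (Fin (p'+1)) ℝ := fun T => (1/(T:ℝ)) • G T with hB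
  set v : ℕ → Fin (p'+1) → ℝ := fun T => ∑ t ∈ Finset.range ⌊(T:ℝ)*s⌋₊, x t with hv
  set c : ℕ → Fin (p'+1) → ℝ :=
    fun T => (((1/(T:ℝ)) • v T) ᵥ* (B T)⁻¹) - s • e with hc
  -- A is invertible
  have hAunit : IsUnit A.det := by
    rw [isUnit_iff_ne_zero]
    intro hdet
    obtain ⟨w, hw, hw0⟩ := (Matrix.exists_mulVec_eq_zero_iff).2 hdet
    have h0 : (A *ᵥ w) 0 = w 0 := by
      simp [Matrix.mulVec, dotProduct, A, Fin.sum_univ_succ]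
    have hsucc : ∀ i, (A *ᵥ w) i.succ = Q i ⬝ᵥ (Fin.tail w) := by
      intro i
      simp [Matrix.mulVec, dotProduct, A, Fin.sum_univ_succ, Fin.tail]
    have hw00 : w 0 = 0 := by rw [← h0, hw0]; rfl
    have htail : Fin.tail w = 0 := by
      by_contra htw
      have hQ0 : Q *ᵥ (Fin.tail w) = 0 := by
        ext i
        have := hsucc i
        rw [hw0] at this
        simpa [Matrix.mulVec] using this.symm
      have := Matrix.exists_mulVec_eq_zero_iff.1 ⟨Fin.tail w, htw, hQ0⟩
      exact hQ.det_pos.ne' this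
    apply hw
    ext i
    refine Fin.cases ?_ ?_ i
    · exact hw00
    · intro j; exact congrFun htail j
  have hAdet : A.det ≠ 0 := by
    simpa [isUnit_iff_ne_zero] using hAunit
  -- B tends to A
  have hBA : Tendsto B atTop (nhds A) := by
    have hone : Tendsto (fun T : ℕ => (1 / (T : ℝ)) * T) atTop (nhds 1) := by
      have heq : ∀ᶠ T : ℕ in atTop, (1 / (T : ℝ)) * T = 1 := by
        filter_upwards [eventually_gt_atTop 0] with T hT
        have : (T:ℝ) ≠ 0 := by positivity
        field_simp
      exact Tendsto.congr' (heq.mono fun T h => h.symm) tendsto_const_nhds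
    have hces : ∀ j, Tendsto (fun T : ℕ => (1/(T:ℝ)) * ∑ t ∈ Finset.range T, xt t j)
        atTop (nhds 0) := by
      intro j
      have h1 := hcesaro 1 ⟨zero_le_one, le_rfl⟩
      rw [tendsto_pi_nhds] at h1
      have h2 := h1 j
      simp only [mul_one, Nat.floor_natCast, Pi.smul_apply, Finset.sum_apply,
        smul_eq_mul, Pi.zero_apply] at h2
      exact h2
    have hsec : ∀ i j,
        Tendsto (fun T : ℕ => (1/(T:ℝ)) * ∑ t ∈ Finset.range T, xt t i * xt t j)
        atTop (nhds (Q i j)) := by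
      intro i j
      replace hsecond := tendsto_pi_nhds.1 hsecond
      have h2 := hsecond i
      rw [tendsto_pi_nhds] at h2
      have h3 := h2 j
      simp only [Pi.smul_apply, Matrix.sum_apply, smul_eq_mul, Matrix.smul_apply,
        Matrix.vecMulVec_apply] at h3
      exact h3
    refine tendsto_pi_nhds.2 fun i => tendsto_pi_nhds.2 fun j => ?_
    have hBij : ∀ i j, (fun T : ℕ => (B T) i j)
        = fun T : ℕ => (1/(T:ℝ)) * ∑ t ∈ Finset.range T, x t i * x t j := by
      intro i j
      funext T
      simp [hB, hG, Matrix.smul_apply, Matrix.sum_apply, Matrix.vecMulVec_apply]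
    rw [show (fun T : ℕ => (B T) i j) = _ from hBij i j]
    refine Fin.cases ?_ ?_ i
    · refine Fin.cases ?_ ?_ j
      · simpa [hx, hA] using hone
      · intro j'
        simpa [hx, hA] using hces j'
    · intro i'
      refine Fin.cases ?_ ?_ j
      · simpa [hx, hA] using hces i'
      · intro j'
        simpa [hx, hA] using hsec i' j'
  have hBinv : Tendsto (fun T => (B T)⁻¹) atTop (nhds A⁻¹) :=
    olsAux_inv_tendsto B A hBA hAdet
  have hdetB : ∀ᶠ T in atTop, IsUnit (B T).det := by
    have hdet : Tendsto (fun T => (B T).det) atTop (nhds A.det) :=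
      ((continuous_id.matrix_det).tendsto A).comp hBA
    filter_upwards [hdet.eventually_ne hAdet] with T hT
    rwa [isUnit_iff_ne_zero]
  -- (1/T) • v T tends to s • e
  have hvs : Tendsto (fun T : ℕ => (1/(T:ℝ)) • v T) atTop (nhds (s • e)) := by
    refine tendsto_pi_nhds.2 fun i => ?_
    refine Fin.cases ?_ ?_ i
    · have h0 : ∀ T : ℕ, ((1/(T:ℝ)) • v T) 0 = (1/(T:ℝ)) * (⌊(T:ℝ)*s⌋₊ : ℝ) := by
        intro T
        simp [hv, Finset.sum_apply, hx]
      simp only [h0]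
      have : (s • e) 0 = s := by simp [he]
      rw [this]
      exact olsAux_floor_tendsto s hs0
    · intro j
      have h0 : ∀ T : ℕ, ((1/(T:ℝ)) • v T) j.succ
          = (1/(T:ℝ)) * ∑ t ∈ Finset.range ⌊(T:ℝ)*s⌋₊, xt t j := by
        intro T
        simp [hv, Finset.sum_apply, hx]
      simp only [h0]
      have h1 : (s • e) j.succ = 0 := by simp [he, Fin.succ_ne_zero]
      rw [h1]
      have h2 := hcesaro s ⟨hs0, hs1⟩
      rw [tendsto_pi_nhds] at h2
      have h3 := h2 j
      simpa [Pi.smul_apply, Finset.sum_apply, smul_eq_mul] using h3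
  -- e ᵥ* A⁻¹ = e
  have heA : e ᵥ* A⁻¹ = e := by
    have h1 : e ᵥ* A = e := by
      ext j
      simp only [Matrix.vecMul, dotProduct, he, Pi.single_apply]
      rw [Finset.sum_eq_single 0]
      · refine Fin.cases ?_ ?_ j <;> simp [hA, Fin.succ_ne_zero]
      · intro b _ hb; simp [hb]
      · simp
    conv_lhs => rw [← h1]
    rw [Matrix.vecMul_vecMul, Matrix.mul_nonsing_inv _ hAunit, Matrix.vecMul_one]
  -- c tends to 0
  have hczero : Tendsto c atTop (nhds 0) := by
    have hvm := olsAux_vecMul_tendsto _ _ _ _ hvs hBinv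
    have : (s • e) ᵥ* A⁻¹ = s • e := by
      rw [Matrix.smul_vecMul, heA]
    rw [this] at hvm
    have := hvm.sub (tendsto_const_nhds (x := s • e))
    simpa [hc] using this
  -- the quadratic form tends to 0
  have hquad : Tendsto (fun T => c T ⬝ᵥ (B T *ᵥ c T)) atTop (nhds 0) :=
    olsAux_quadform_tendsto c B A hczero hBA
  -- the scalar bound tends to 0
  have hboundlim : Tendsto (fun T => σ2 * (c T ⬝ᵥ (B T *ᵥ c T)) / η^2) atTop (nhds 0) := by
    have := (tendsto_const_nhds (x := σ2)).mul hquad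
    have h2 := this.div_const (η^2)
    simpa using h2
  -- main estimate
  apply tendsto_of_tendsto_of_tendsto_of_le_of_le'
    (g := fun _ : ℕ => (0 : ENNReal))
    (h := fun T : ℕ => ENNReal.ofReal (σ2 * (c T ⬝ᵥ (B T *ᵥ c T)) / η^2))
    tendsto_const_nhds
  · have := (ENNReal.continuous_ofReal.tendsto 0).comp hboundlim
    simpa [Function.comp_def] using this
  · exact Eventually.of_forall fun T => zero_le
  · filter_upwards [hdetB, eventually_ge_atTop 1] with T hu hT
    have hT0 : (0:ℝ) < T := by exact_mod_cast hT
    have hTne : (T:ℝ) ≠ 0 := hT0.ne'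
    have hsq : (0:ℝ) < Real.sqrt T := Real.sqrt_pos.2 hT0
    -- definitions for this T
    set a : ℕ → ℝ := fun t => c T ⬝ᵥ x t with ha
    set Y : Ω → ℝ := ∑ t ∈ Finset.range T, a t • ε t with hY
    set Z : Ω → ℝ := (1 / Real.sqrt T) • Y with hZ
    obtain ⟨hvarY, hmemY, hintY⟩ :=
      olsAux_weighted_iid μ ε σ2 hindep hident hL2 hmean hvar a T
    have hmemZ : MemLp Z 2 μ := hmemY.const_smul _
    have hintZ : ∫ ω, Z ω ∂μ = 0 := by
      rw [hZ]
      simp only [Pi.smul_apply, smul_eq_mul]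
      rw [MeasureTheory.integral_const_mul, hintY, mul_zero]
    -- G T = T • B T and inverse
    have hGB : G T = (T:ℝ) • B T := by
      rw [hB]
      simp only [smul_smul]
      rw [mul_one_div, div_self hTne, one_smul]
    have hGinv : (G T)⁻¹ = (T:ℝ)⁻¹ • (B T)⁻¹ := by
      rw [hGB]
      exact olsAux_smul_matrix_inv hT _ hu
    -- pointwise identity
    have hptw : ∀ ω,
        (1 / Real.sqrt T) * ∑ t ∈ Finset.range ⌊(T : ℝ) * s⌋₊, x t ⬝ᵥ δ T ω
          - (s / Real.sqrt T) * ∑ t ∈ Finset.range T, ε t ω = Z ω := by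
      intro ω
      set w : Fin (p'+1) → ℝ := ∑ t ∈ Finset.range T, ε t ω • x t with hw
      have hw0 : w 0 = ∑ t ∈ Finset.range T, ε t ω := by
        simp [hw, Finset.sum_apply, hx]
      have hsum1 : ∑ t ∈ Finset.range ⌊(T : ℝ) * s⌋₊, x t ⬝ᵥ δ T ω
          = v T ⬝ᵥ ((G T)⁻¹ *ᵥ w) := by
        rw [hv, olsAux_sum_dotProduct]
        refine Finset.sum_congr rfl fun t _ => ?_
        rw [hδ]
      have hsum2 : v T ⬝ᵥ ((G T)⁻¹ *ᵥ w)
          = (T:ℝ)⁻¹ * ((v T ᵥ* (B T)⁻¹) ⬝ᵥ w) := by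
        rw [hGinv, Matrix.smul_mulVec, dotProduct_smul, smul_eq_mul,
          dotProduct_mulVec]
      have hcw : c T ⬝ᵥ w = (T:ℝ)⁻¹ * ((v T ᵥ* (B T)⁻¹) ⬝ᵥ w) - s * w 0 := by
        rw [hc]
        simp only [sub_dotProduct]
        rw [Matrix.smul_vecMul, smul_dotProduct, smul_eq_mul, one_div,
          olsAux_dotProduct_single]
      have hcw2 : c T ⬝ᵥ w = ∑ t ∈ Finset.range T, a t * ε t ω := by
        rw [hw, olsAux_dotProduct_sum]
        refine Finset.sum_congr rfl fun t _ => ?_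
        rw [dotProduct_smul, smul_eq_mul, ha, mul_comm]
      have hZω : Z ω = (1 / Real.sqrt T) * ∑ t ∈ Finset.range T, a t * ε t ω := by
        simp [hZ, hY, Finset.sum_apply]
      rw [hZω, ← hcw2, hcw, hsum1, hsum2, hw0]
      ring
    -- variance of Z
    have hvarZ : variance Z μ = σ2 * (c T ⬝ᵥ (B T *ᵥ c T)) := by
      have h1 : variance Z μ = (1/Real.sqrt T)^2 * variance Y μ := by
        rw [hZ, variance_smul]
      have h2 : (1/Real.sqrt T)^2 = 1/(T:ℝ) := by
        rw [div_pow, one_pow, Real.sq_sqrt hT0.le]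
      have h3 : c T ⬝ᵥ (B T *ᵥ c T) = (1/(T:ℝ)) * ∑ t ∈ Finset.range T, (a t)^2 := by
        rw [hB, Matrix.smul_mulVec, dotProduct_smul, smul_eq_mul, hG,
          olsAux_sum_mulVec, olsAux_dotProduct_sum]
        congr 1
        exact Finset.sum_congr rfl fun t _ => olsAux_quad_eq (x t) (c T)
      rw [h1, h2, hvarY, h3]
      ring
    -- Chebyshev
    have hcheb := meas_ge_le_variance_div_sq (μ := μ) hmemZ hη
    have hsubset : {ω | η < |(1 / Real.sqrt T) * ∑ t ∈ Finset.range ⌊(T : ℝ) * s⌋₊,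
        x t ⬝ᵥ δ T ω - (s / Real.sqrt T) * ∑ t ∈ Finset.range T, ε t ω|}
        ⊆ {ω | η ≤ |Z ω - μ[Z]|} := by
      intro ω hω
      simp only [Set.mem_setOf_eq] at hω ⊢
      rw [show μ[Z] = (0:ℝ) from hintZ, sub_zero, ← hptw ω]
      exact hω.le
    calc μ {ω | η < |(1 / Real.sqrt T) * ∑ t ∈ Finset.range ⌊(T : ℝ) * s⌋₊,
          x t ⬝ᵥ δ T ω - (s / Real.sqrt T) * ∑ t ∈ Finset.range T, ε t ω|}
        ≤ μ {ω | η ≤ |Z ω - μ[Z]|} := measure_mono hsubset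
      _ ≤ ENNReal.ofReal (variance Z μ / η^2) := hcheb
      _ = ENNReal.ofReal (σ2 * (c T ⬝ᵥ (B T *ᵥ c T)) / η^2) := by rw [hvarZ]
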